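/- (Covering density of MRD codes) Let q be a prime power, n ≤ m positive integers, t ≥ 0 an integer with 2t + 1 ≤ n, and let C be a set of m×n matrices over F_q with |C| = q^{m(n−2t)} and minimum rank distance 2t + 1 (an MRD code). Then the covering density D = |C| · B_t / q^{mn} satisfies q^{−((m−n+2)t + t²)} ≤ D ≤ q^{−((m−n−1)t + t²)}, where B_t is the number of m×n matrices over F_q of rank at most t. -/

import Mathlib

/-- Number of `m × n` matrices over `F` of rank at most `t`. -/
noncomputable def ballCount (F : Type*) [Field F] [Fintype F] (m n t : ℕ) : ℕ :=
  Nat.card {A : Matrix (Fin m) (Fin n) F // A.rank ≤ t}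

/-- `d` is the minimum rank distance of the code `C` (a set of `m × n` matrices over `F`). -/
def IsMinRankDist {F : Type*} [Field F] [Fintype F] {m n : ℕ}
    (C : Set (Matrix (Fin m) (Fin n) F)) (d : ℕ) : Prop :=
  (∀ c₁ ∈ C, ∀ c₂ ∈ C, c₁ ≠ c₂ → d ≤ (c₁ - c₂).rank) ∧
  ∃ c₁ ∈ C, ∃ c₂ ∈ C, c₁ ≠ c₂ ∧ (c₁ - c₂).rank = d

section Aux

open Module Submodule Matrix

variable {F : Type*} [Field F] [Fintype F]

private lemma exists_superspace {n : ℕ} (k : ℕ) (W : Submodule F (Fin n → F))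
    (h1 : finrank F W ≤ k) (h2 : k ≤ n) : ∃ V, W ≤ V ∧ finrank F V = k := by
  induction k with
  | zero =>
    refine ⟨⊥, ?_, by simp⟩
    rw [Nat.le_zero] at h1
    rw [Submodule.finrank_eq_zero] at h1
    exact h1.le
  | succ k ih =>
    rcases eq_or_lt_of_le h1 with h | h
    · exact ⟨W, le_rfl, h⟩
    · obtain ⟨V, hWV, hV⟩ := ih (Nat.lt_succ_iff.mp h) (Nat.le_of_succ_le h2)
      have hVtop : V < ⊤ := by
        rcases lt_or_eq_of_le (le_top : V ≤ ⊤) with h' | h'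
        · exact h'
        · exfalso
          have : finrank F V = n := by
            rw [h', finrank_top, Module.finrank_fintype_fun_eq_card, Fintype.card_fin]
          omega
      obtain ⟨x, _, hx⟩ := SetLike.exists_of_lt hVtop
      have hx0 : x ≠ 0 := fun h0 => hx (h0 ▸ V.zero_mem)
      refine ⟨V ⊔ (F ∙ x), le_trans hWV le_sup_left, le_antisymm ?_ ?_⟩
      · have := Submodule.finrank_sup_add_finrank_inf_eq V (F ∙ x)
        have h1' := finrank_span_singleton (K := F) hx0
        omega
      · have hlt : V < V ⊔ (F ∙ x) := by
          refine lt_of_le_of_ne le_sup_left (fun he => hx ?_)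
          rw [he]
          exact le_sup_right (α := Submodule F (Fin n → F)) (mem_span_singleton_self x)
        have := Submodule.finrank_lt_finrank_of_lt hlt
        omega

private lemma rows_li_right_cancel {s t n : ℕ} {Y : Matrix (Fin t) (Fin n) F}
    (hY : LinearIndependent F Y) {M M' : Matrix (Fin s) (Fin t) F}
    (h : M * Y = M' * Y) : M = M' := by
  ext i k
  have hg : ∀ g : Fin t → F, (∑ j, g j • Y j) = 0 → ∀ j, g j = 0 :=
    Fintype.linearIndependent_iff.mp hY
  have key : (∑ j, (M i j - M' i j) • Y j) = 0 := by
    funext l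
    have := congrFun (congrFun h i) l
    simp only [Matrix.mul_apply] at this
    simp only [Finset.sum_apply, Pi.smul_apply, smul_eq_mul, sub_mul, Pi.zero_apply,
      Finset.sum_sub_distrib, this, sub_self]
  have := hg _ key k
  exact sub_eq_zero.mp this

private lemma exists_factorization {m n t : ℕ} (A : Matrix (Fin m) (Fin n) F)
    (hA : A.rank ≤ t) (htn : t ≤ n) :
    ∃ (X : Matrix (Fin m) (Fin t) F) (Y : Matrix (Fin t) (Fin n) F),
      LinearIndependent F Y ∧ A = X * Y := by
  classical
  have hspan : finrank F (span F (Set.range A)) ≤ t := by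
    rw [Matrix.rank_eq_finrank_span_row] at hA; exact hA
  obtain ⟨V, hWV, hV⟩ := exists_superspace t (span F (Set.range A)) hspan htn
  have : FiniteDimensional F V := inferInstance
  let b : Basis (Fin t) F V := finBasisOfFinrankEq F V hV
  refine ⟨fun i k => b.repr ⟨A i, hWV (subset_span (Set.mem_range_self i))⟩ k,
    fun k => (b k : Fin n → F), ?_, ?_⟩
  · exact b.linearIndependent.map' V.subtype (ker_subtype V)
  · ext i j
    show A i j = ∑ k, (b.repr ⟨A i, hWV (subset_span (Set.mem_range_self i))⟩ k) * (b k : Fin n → F) j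
    have hmem : A i ∈ V := hWV (subset_span (Set.mem_range_self i))
    have := b.sum_repr ⟨A i, hmem⟩
    have h2 := congrArg (fun v : V => (v : Fin n → F) j) this
    simp only [AddSubmonoidClass.coe_finset_sum, SetLike.val_smul, Finset.sum_apply,
      Pi.smul_apply, smul_eq_mul] at h2
    exact h2.symm

private lemma card_GL_ge (q t : ℕ) (hq : Fintype.card F = q) :
    q ^ (t * (t - 1)) ≤ Nat.card (GL (Fin t) F) := by
  rw [Matrix.card_GL_field, hq]
  have hq2 : 2 ≤ q := hq ▸ Fintype.one_lt_card
  calc q ^ (t * (t-1)) = ∏ _i : Fin t, q ^ (t-1) := by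
        rw [Finset.prod_const, Finset.card_univ, Fintype.card_fin, ← pow_mul, mul_comm]
    _ ≤ ∏ i : Fin t, (q ^ t - q ^ (i : ℕ)) := by
        apply Finset.prod_le_prod'
        intro i _
        have ht0 : 0 < t := i.pos
        have h1 : q ^ (i : ℕ) ≤ q ^ (t - 1) :=
          Nat.pow_le_pow_right (by omega) (by omega)
        have h2 : q ^ t = q * q ^ (t - 1) := by
          rw [← pow_succ']
          congr 1
          omega
        have h3 : 2 * q ^ (t-1) ≤ q * q ^ (t-1) := Nat.mul_le_mul_right _ hq2
        omega

private lemma card_matrix_fin (q a b : ℕ) (hq : Fintype.card F = q) :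
    Nat.card (Matrix (Fin a) (Fin b) F) = q ^ (a * b) := by
  rw [Nat.card_eq_fintype_card]
  show Fintype.card (Fin a → Fin b → F) = q ^ (a * b)
  simp [hq, ← pow_mul, mul_comm]

private lemma ballCount_lower (q m n t : ℕ) (hq : Fintype.card F = q)
    (htn : t ≤ n) (htm : t ≤ m) :
    Nat.card (GL (Fin t) F) * (q ^ ((m - t) * t) * q ^ (t * (n - t)))
      ≤ ballCount F m n t := by
  classical
  let e_m : Fin t ⊕ Fin (m - t) ≃ Fin m := finSumFinEquiv.trans (finCongr (by omega))
  let e_n : Fin t ⊕ Fin (n - t) ≃ Fin n := finSumFinEquiv.trans (finCongr (by omega))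
  set φ : GL (Fin t) F × Matrix (Fin (m - t)) (Fin t) F × Matrix (Fin t) (Fin (n - t)) F →
      {A : Matrix (Fin m) (Fin n) F // A.rank ≤ t} :=
    fun P =>
      ⟨((fromRows (P.1 : Matrix (Fin t) (Fin t) F) P.2.1).submatrix e_m.symm _root_.id) *
        ((fromCols 1 P.2.2).submatrix _root_.id e_n.symm), by
        refine le_trans (rank_mul_le_left _ _) (le_trans (rank_le_card_width _) (by simp))⟩
    with hφ
  have hinj : Function.Injective φ := by
    rintro ⟨G, W, Z⟩ ⟨G', W', Z'⟩ h
    have hA := congrArg Subtype.val h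
    simp only [hφ] at hA
    have hX : (fromRows (G : Matrix (Fin t) (Fin t) F) W).submatrix e_m.symm _root_.id =
        (fromRows (G' : Matrix (Fin t) (Fin t) F) W').submatrix e_m.symm _root_.id := by
      ext i l
      have h1 := congrFun (congrFun hA i) (e_n (Sum.inl l))
      simpa [Matrix.mul_apply, Matrix.submatrix_apply, Equiv.symm_apply_apply,
        fromCols_apply_inl, Matrix.one_apply, mul_ite, mul_one, mul_zero] using h1
    have hG : G = G' := by
      ext s k
      have := congrFun (congrFun hX (e_m (Sum.inl s))) k
      simpa [Matrix.submatrix_apply, Equiv.symm_apply_apply] using this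
    have hW : W = W' := by
      ext r k
      have := congrFun (congrFun hX (e_m (Sum.inr r))) k
      simpa [Matrix.submatrix_apply, Equiv.symm_apply_apply] using this
    have hGZ : (G : Matrix (Fin t) (Fin t) F) * Z = (G' : Matrix (Fin t) (Fin t) F) * Z' := by
      ext s j'
      have h1 := congrFun (congrFun hA (e_m (Sum.inl s))) (e_n (Sum.inr j'))
      simpa [Matrix.mul_apply, Matrix.submatrix_apply, Equiv.symm_apply_apply] using h1
    have hZ : Z = Z' := by
      rw [← hG] at hGZ
      have h2 := congrArg
        (fun M => ((G⁻¹ : GL (Fin t) F) : Matrix (Fin t) (Fin t) F) * M) hGZ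
      have hdet : IsUnit ((G : Matrix (Fin t) (Fin t) F).det) :=
        (Matrix.isUnit_iff_isUnit_det _).mp ⟨G, rfl⟩
      simpa [← Matrix.mul_assoc, Matrix.nonsing_inv_mul _ hdet, Matrix.one_mul] using h2
    exact Prod.ext hG (Prod.ext hW hZ)
  have := Nat.card_le_card_of_injective φ hinj
  calc Nat.card (GL (Fin t) F) * (q ^ ((m - t) * t) * q ^ (t * (n - t)))
      = Nat.card (GL (Fin t) F × Matrix (Fin (m-t)) (Fin t) F × Matrix (Fin t) (Fin (n-t)) F) := by
        rw [Nat.card_prod, Nat.card_prod, card_matrix_fin q _ _ hq, card_matrix_fin q _ _ hq]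
    _ ≤ ballCount F m n t := this

private lemma ballCount_upper (q m n t : ℕ) (hq : Fintype.card F = q) (htn : t ≤ n) :
    ballCount F m n t * Nat.card (GL (Fin t) F) ≤ q ^ (m * t) * q ^ (t * n) := by
  classical
  have hfact : ∀ A : {A : Matrix (Fin m) (Fin n) F // A.rank ≤ t},
      ∃ P : Matrix (Fin m) (Fin t) F × Matrix (Fin t) (Fin n) F,
        LinearIndependent F P.2 ∧ (A : Matrix (Fin m) (Fin n) F) = P.1 * P.2 := by
    intro A
    obtain ⟨X, Y, h1, h2⟩ := exists_factorization (A : Matrix (Fin m) (Fin n) F) A.2 htn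
    exact ⟨(X, Y), h1, h2⟩
  choose f hf1 hf2 using hfact
  set ψ : {A : Matrix (Fin m) (Fin n) F // A.rank ≤ t} × GL (Fin t) F →
      Matrix (Fin m) (Fin t) F × Matrix (Fin t) (Fin n) F :=
    fun P => ((f P.1).1 * ((P.2⁻¹ : GL (Fin t) F) : Matrix (Fin t) (Fin t) F),
      ((P.2 : Matrix (Fin t) (Fin t) F) * (f P.1).2)) with hψ
  have hprod : ∀ P : {A : Matrix (Fin m) (Fin n) F // A.rank ≤ t} × GL (Fin t) F,
      (ψ P).1 * (ψ P).2 = (P.1 : Matrix (Fin m) (Fin n) F) := by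
    rintro ⟨A, G⟩
    simp only [hψ]
    rw [Matrix.mul_assoc, ← Matrix.mul_assoc ((G⁻¹ : GL (Fin t) F) : Matrix (Fin t) (Fin t) F)]
    rw [show ((G⁻¹ : GL (Fin t) F) : Matrix (Fin t) (Fin t) F) *
        (G : Matrix (Fin t) (Fin t) F) = 1 from Units.inv_mul G]
    rw [Matrix.one_mul, ← hf2]
  have hinj : Function.Injective ψ := by
    rintro ⟨A, G⟩ ⟨A', G'⟩ h
    have hAA : A = A' := by
      apply Subtype.ext
      rw [← hprod ⟨A, G⟩, ← hprod ⟨A', G'⟩, h]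
    subst hAA
    have h2 : (G : Matrix (Fin t) (Fin t) F) * (f A).2
        = (G' : Matrix (Fin t) (Fin t) F) * (f A).2 := congrArg Prod.snd h
    have := rows_li_right_cancel (hf1 A) h2
    exact Prod.ext rfl (Units.ext this)
  have hle := Nat.card_le_card_of_injective ψ hinj
  rw [Nat.card_prod, Nat.card_prod, card_matrix_fin q _ _ hq, card_matrix_fin q _ _ hq] at hle
  exact hle

end Aux

set_option maxHeartbeats 1000000 in
/-- Covering density bounds for MRD codes. -/
theorem stmt16 (q : ℕ) (F : Type*) [Field F] [Fintype F] (hq : Fintype.card F = q)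
    (m n t : ℕ) (hn : 1 ≤ n) (hnm : n ≤ m) (ht : 2 * t + 1 ≤ n)
    (C : Set (Matrix (Fin m) (Fin n) F)) (hcard : Nat.card C = q ^ (m * (n - 2 * t)))
    (hd : IsMinRankDist C (2 * t + 1)) :
    (q : ℝ) ^ (-(((m : ℤ) - n + 2) * t + (t : ℤ) ^ 2)) ≤
      (Nat.card C * ballCount F m n t : ℝ) / (q : ℝ) ^ (m * n) ∧
    (Nat.card C * ballCount F m n t : ℝ) / (q : ℝ) ^ (m * n) ≤
      (q : ℝ) ^ (-(((m : ℤ) - n - 1) * t + (t : ℤ) ^ 2)) := by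
  have hq2 : 2 ≤ q := hq ▸ Fintype.one_lt_card
  have htn : t ≤ n := by omega
  have htm : t ≤ m := le_trans htn hnm
  have hQ0 : (0 : ℝ) < (q : ℝ) := by
    have : (0:ℕ) < q := by omega
    exact_mod_cast this
  have hQ1 : (1 : ℝ) ≤ (q : ℝ) := by
    have : (1:ℕ) ≤ q := by omega
    exact_mod_cast this
  set B := ballCount F m n t with hB
  have hGL := card_GL_ge q t hq
  have hlow : q ^ (t*(t-1)) * (q ^ ((m-t)*t) * q ^ (t*(n-t))) ≤ B :=
    le_trans (Nat.mul_le_mul_right _ hGL) (ballCount_lower q m n t hq htn htm)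
  have hupp : B * q ^ (t*(t-1)) ≤ q ^ (m*t) * q ^ (t*n) :=
    le_trans (Nat.mul_le_mul_left _ hGL) (ballCount_upper q m n t hq htn)
  set a := m * (n - 2*t) with ha
  set EL := t*(t-1) + ((m-t)*t + t*(n-t)) with hEL
  have hlow' : q ^ EL ≤ B := by rw [hEL, pow_add, pow_add]; exact hlow
  have c1 : ((t*(t-1) : ℕ) : ℤ) = (t:ℤ) * t - t := by
    rcases Nat.eq_zero_or_pos t with rfl | ht0
    · simp
    · rw [Nat.cast_mul, Nat.cast_sub ht0]; push_cast; ring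
  have c2 : (((m-t)*t : ℕ) : ℤ) = (m:ℤ)*t - (t:ℤ)*t := by
    rw [Nat.cast_mul, Nat.cast_sub htm]; push_cast; ring
  have c3 : ((t*(n-t) : ℕ) : ℤ) = (t:ℤ)*n - (t:ℤ)*t := by
    rw [Nat.cast_mul, Nat.cast_sub htn]; push_cast; ring
  have c4 : ((a : ℕ) : ℤ) = (m:ℤ)*n - 2*((m:ℤ)*t) := by
    rw [ha, Nat.cast_mul, Nat.cast_sub (by omega : 2*t ≤ n)]; push_cast; ring
  have cEL : ((EL : ℕ) : ℤ) = ((t:ℤ)*t - t) + (((m:ℤ)*t - (t:ℤ)*t) + ((t:ℤ)*n - (t:ℤ)*t)) := by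
    rw [hEL, Nat.cast_add, Nat.cast_add, c1, c2, c3]
  have ht0 : (0:ℤ) ≤ (t:ℤ) := Int.ofNat_nonneg t
  rw [hcard]
  push_cast [hB]
  constructor
  · rw [le_div_iff₀ (by positivity)]
    calc (q:ℝ) ^ (-(((m : ℤ) - n + 2) * t + (t : ℤ) ^ 2)) * (q:ℝ) ^ (m*n)
        = (q:ℝ) ^ ((-(((m : ℤ) - n + 2) * t + (t : ℤ) ^ 2)) + ((m*n : ℕ) : ℤ)) := by
          rw [← zpow_natCast (q:ℝ) (m*n), ← zpow_add₀ hQ0.ne']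
      _ ≤ (q:ℝ) ^ (((a + EL : ℕ) : ℤ)) := by
          apply zpow_le_zpow_right₀ hQ1
          rw [Nat.cast_add, c4, cEL]
          push_cast
          nlinarith [ht0]
      _ = (q:ℝ) ^ (a + EL) := zpow_natCast _ _
      _ = (q:ℝ) ^ a * (q:ℝ) ^ EL := pow_add _ _ _
      _ ≤ (q:ℝ) ^ a * (B : ℝ) := by
          have hc : ((q:ℝ)) ^ EL ≤ (B : ℝ) := by exact_mod_cast hlow'
          exact mul_le_mul_of_nonneg_left hc (by positivity)
  · rw [div_le_iff₀ (by positivity)]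
    have huppR : (B:ℝ) ≤ (q:ℝ) ^ (((m*t + t*n : ℕ) : ℤ) - ((t*(t-1) : ℕ) : ℤ)) := by
      rw [zpow_sub₀ hQ0.ne', zpow_natCast, zpow_natCast, le_div_iff₀ (by positivity)]
      have h' : (B * q^(t*(t-1)) : ℕ) ≤ q ^ (m*t + t*n) := by rw [pow_add]; exact hupp
      exact_mod_cast h'
    calc (q:ℝ) ^ a * (B : ℝ)
        ≤ (q:ℝ) ^ a * (q:ℝ) ^ (((m*t + t*n : ℕ) : ℤ) - ((t*(t-1) : ℕ) : ℤ)) :=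
          mul_le_mul_of_nonneg_left huppR (by positivity)
      _ = (q:ℝ) ^ (((a:ℕ):ℤ) + ((((m*t + t*n : ℕ) : ℤ)) - ((t*(t-1) : ℕ) : ℤ))) := by
          rw [← zpow_natCast (q:ℝ) a, ← zpow_add₀ hQ0.ne']
      _ ≤ (q:ℝ) ^ ((-(((m : ℤ) - n - 1) * t + (t : ℤ) ^ 2)) + ((m*n : ℕ) : ℤ)) := by
          apply zpow_le_zpow_right₀ hQ1
          rw [c4, c1]
          push_cast
          nlinarith [ht0]
      _ = (q:ℝ) ^ (-(((m : ℤ) - n - 1) * t + (t : ℤ) ^ 2)) * (q:ℝ) ^ (m*n) := by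
          rw [zpow_add₀ hQ0.ne', zpow_natCast]
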